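/- Let f : ℝⁿ → ℝ be continuously differentiable, let S be a closed set on which f attains value f*, and suppose f satisfies the Łojasiewicz inequality |f(x) - f*|^{2θ} ≤ (1/(2μ))‖∇f(x)‖² with θ ∈ [0,1) and μ > 0 on a neighborhood U of a local minimum x̄ ∈ S, and f(x) ≥ f* on U. If x : [0,T] → ℝⁿ solves the negative gradient flow x'(t) = -∇f(x(t)) with x(t) ∈ U and ∇f(x(t)) ≠ 0 for all t ∈ (0,T), then the path length satisfies ∫₀ᵀ ‖x'(t)‖ dt ≤ (1/((1-θ)√(2μ))) |f(x(0)) - f*|^{1-θ}. -/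

import Mathlib

open Metric Filter Topology

/-- Bounded path length of gradient flow trajectories under the Łojasiewicz inequality. -/
theorem loja_gradient_flow_path_length {n : ℕ}
    (f : EuclideanSpace ℝ (Fin n) → ℝ) (xb : EuclideanSpace ℝ (Fin n))
    (hf : ContDiff ℝ 1 f) (hmin : IsLocalMin f xb)
    (θ μ : ℝ) (hθ0 : 0 ≤ θ) (hθ1 : θ < 1) (hμ : 0 < μ)
    (U : Set (EuclideanSpace ℝ (Fin n))) (hU : U ∈ 𝓝 xb)
    (hLoja : ∀ x ∈ U, |f x - f xb| ^ (2 * θ) ≤ (1 / (2 * μ)) * ‖gradient f x‖ ^ 2)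
    (hge : ∀ x ∈ U, f xb ≤ f x)
    (T : ℝ) (hT : 0 < T) (x : ℝ → EuclideanSpace ℝ (Fin n))
    (hx0 : x 0 ∈ U)
    (hflow : ∀ t ∈ Set.Icc (0 : ℝ) T, HasDerivAt x (-(gradient f (x t))) t)
    (hin : ∀ t ∈ Set.Ioo (0 : ℝ) T, x t ∈ U)
    (hne : ∀ t ∈ Set.Ioo (0 : ℝ) T, gradient f (x t) ≠ 0) :
    ∫ t in (0 : ℝ)..T, ‖gradient f (x t)‖ ≤
      (1 / ((1 - θ) * Real.sqrt (2 * μ))) * |f (x 0) - f xb| ^ (1 - θ) := by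
  have hθ1' : (0:ℝ) < 1 - θ := by linarith
  set a : ℝ := Real.sqrt (2 * μ) with ha
  have ha0 : 0 < a := Real.sqrt_pos.mpr (by linarith)
  set c : ℝ := 1 / ((1 - θ) * a) with hc
  have hc0 : 0 < c := by positivity
  set g : ℝ → ℝ := fun t => f (x t) - f xb with hgdef
  set G : ℝ → ℝ := fun t => ‖gradient f (x t)‖ with hGdef
  -- continuity of gradient
  have hgradc : Continuous (gradient f) := by
    have h1 : Continuous (fderiv ℝ f) := hf.continuous_fderiv one_ne_zero
    exact ((InnerProductSpace.toDual ℝ (EuclideanSpace ℝ (Fin n))).symm.continuous).comp h1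
  -- derivative of g
  have hg' : ∀ t ∈ Set.Icc (0:ℝ) T, HasDerivAt g (-(G t)^2) t := by
    intro t ht
    have hd : DifferentiableAt ℝ f (x t) := (hf.differentiable one_ne_zero) (x t)
    have hgr := hd.hasGradientAt.hasFDerivAt
    have hcomp := hgr.comp_hasDerivAt t (hflow t ht)
    have hval : (InnerProductSpace.toDual ℝ (EuclideanSpace ℝ (Fin n))
        (gradient f (x t))) (-(gradient f (x t))) = -(G t)^2 := by
      rw [InnerProductSpace.toDual_apply_apply, inner_neg_right, real_inner_self_eq_norm_sq]
    rw [hval] at hcomp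
    exact hcomp.sub_const _
  have hgcont : ContinuousOn g (Set.Icc 0 T) := fun t ht =>
    ((hg' t ht).continuousAt).continuousWithinAt
  have hxc : ∀ t ∈ Set.Icc (0:ℝ) T, ContinuousAt x t := fun t ht =>
    (hflow t ht).continuousAt
  have hGca : ∀ t ∈ Set.Icc (0:ℝ) T, ContinuousAt G t := fun t ht =>
    continuous_norm.continuousAt.comp ((hgradc.continuousAt).comp (hxc t ht))
  have hGcont : ContinuousOn G (Set.Icc 0 T) := fun t ht => ((hGca t ht)).continuousWithinAt
  -- positivity of g on Ioo
  have hgnn : ∀ t ∈ Set.Ioo (0:ℝ) T, 0 ≤ g t := fun t ht =>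
    sub_nonneg.mpr (hge _ (hin t ht))
  have hGpos : ∀ t ∈ Set.Ioo (0:ℝ) T, 0 < G t := fun t ht =>
    norm_pos_iff.mpr (hne t ht)
  have hgpos : ∀ t ∈ Set.Ioo (0:ℝ) T, 0 < g t := by
    intro t ht
    rcases lt_or_eq_of_le (hgnn t ht) with h | h
    · exact h
    · exfalso
      set s : ℝ := (t + T) / 2 with hs
      have hts : t < s := by rw [hs]; linarith [ht.2]
      have hsT : s < T := by rw [hs]; linarith [ht.2]
      have hsub : Set.Icc t s ⊆ Set.Icc (0:ℝ) T := by
        apply Set.Icc_subset_Icc (le_of_lt ht.1) (le_of_lt hsT)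
      have hanti : StrictAntiOn g (Set.Icc t s) := by
        apply strictAntiOn_of_deriv_neg (convex_Icc t s) (hgcont.mono hsub)
        intro u hu
        rw [interior_Icc] at hu
        have hu' : u ∈ Set.Ioo (0:ℝ) T := ⟨lt_trans ht.1 hu.1, lt_trans hu.2 hsT⟩
        rw [(hg' u (Set.mem_Icc_of_Ioo hu')).deriv]
        have := hGpos u hu'
        nlinarith
      have h1 : g s < g t := hanti (Set.left_mem_Icc.mpr hts.le)
        (Set.right_mem_Icc.mpr hts.le) hts
      have h2 : 0 ≤ g s := hgnn s ⟨lt_trans ht.1 hts, hsT⟩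
      rw [← h] at h1
      linarith
  -- g T ≥ 0
  have hgT : 0 ≤ g T := by
    have hne' : (𝓝[Set.Ioo (0:ℝ) T] T).NeBot := by
      rw [← mem_closure_iff_nhdsWithin_neBot, closure_Ioo hT.ne]
      exact Set.right_mem_Icc.mpr hT.le
    have htend : Filter.Tendsto g (𝓝[Set.Ioo (0:ℝ) T] T) (𝓝 (g T)) :=
      ((hgcont T (Set.right_mem_Icc.mpr hT.le)).mono Set.Ioo_subset_Icc_self).tendsto
    exact ge_of_tendsto htend (eventually_mem_nhdsWithin.mono hgnn)
  have hg0 : 0 ≤ g 0 := sub_nonneg.mpr (hge _ hx0)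
  -- define F and ψ
  set F : ℝ → ℝ := fun u => ∫ s in (0:ℝ)..u, G s with hFdef
  set ψ : ℝ → ℝ := fun u => c * (g u ^ (1 - θ)) + F u with hψdef
  -- derivative of h := g ^ (1-θ) on Ioo
  have hh' : ∀ t ∈ Set.Ioo (0:ℝ) T, HasDerivAt (fun u => g u ^ (1 - θ))
      ((1 - θ) * g t ^ (1 - θ - 1) * (-(G t)^2)) t := by
    intro t ht
    exact (Real.hasDerivAt_rpow_const (Or.inl (hgpos t ht).ne')).comp t
      (hg' t (Set.mem_Icc_of_Ioo ht))
  -- derivative of F on Ioo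
  have hF' : ∀ t ∈ Set.Ioo (0:ℝ) T, HasDerivAt F (G t) t := by
    intro t ht
    have hint : IntervalIntegrable G MeasureTheory.volume 0 t :=
      (hGcont.mono (Set.Icc_subset_Icc le_rfl ht.2.le)).intervalIntegrable_of_Icc ht.1.le
    have hmeas := ContinuousAt.stronglyMeasurableAtFilter (μ := MeasureTheory.volume)
      isOpen_Ioo (fun u hu => hGca u (Set.mem_Icc_of_Ioo hu)) t ht
    exact intervalIntegral.integral_hasDerivAt_right hint hmeas
      (hGca t (Set.mem_Icc_of_Ioo ht))
  -- continuity of ψ on Icc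
  have hFc : ContinuousOn F (Set.Icc 0 T) := by
    have : Set.Icc (0:ℝ) T = Set.uIcc 0 T := (Set.uIcc_of_le hT.le).symm
    rw [this]
    exact intervalIntegral.continuousOn_primitive_interval
      (by rw [← this]; exact hGcont.integrableOn_Icc)
  have hψc : ContinuousOn ψ (Set.Icc 0 T) :=
    (continuousOn_const.mul (hgcont.rpow_const (fun u _ => Or.inr hθ1'.le))).add hFc
  -- ψ derivative and antitonicity
  have hψ' : ∀ t ∈ Set.Ioo (0:ℝ) T, HasDerivAt ψ
      (c * ((1 - θ) * g t ^ (1 - θ - 1) * (-(G t)^2)) + G t) t := fun t ht =>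
    ((hh' t ht).const_mul c).add (hF' t ht)
  have hanti : AntitoneOn ψ (Set.Icc 0 T) := by
    apply antitoneOn_of_deriv_nonpos (convex_Icc 0 T) hψc
    · intro t ht
      rw [interior_Icc] at ht
      exact (hψ' t ht).differentiableAt.differentiableWithinAt
    · intro t ht
      rw [interior_Icc] at ht
      rw [(hψ' t ht).deriv]
      -- key pointwise inequality
      have hgt := hgpos t ht
      have hGt := hGpos t ht
      have hp : 0 < g t ^ θ := Real.rpow_pos_of_pos hgt θ
      have claim0 : g t ^ (2*θ) ≤ 1 / (2*μ) * (G t)^2 := by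
        have := hLoja (x t) (hin t ht)
        rwa [abs_of_nonneg (hgnn t ht)] at this
      have ha2 : a^2 = 2*μ := Real.sq_sqrt (by linarith)
      have hgθsq : (g t ^ θ)^2 = g t ^ (2*θ) := by
        rw [sq, ← Real.rpow_add hgt, two_mul]
      have hsq : (a * g t ^ θ)^2 ≤ (G t)^2 := by
        have h7 : (a * g t ^ θ)^2 = 2*μ * g t ^ (2*θ) := by rw [mul_pow, ha2, hgθsq]
        have h5 := mul_le_mul_of_nonneg_left claim0 (by linarith : (0:ℝ) ≤ 2*μ)
        have h6 : 2*μ*(1/(2*μ)*(G t)^2) = (G t)^2 := by field_simp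
        rw [h7]; linarith
      have claim1 : a * g t ^ θ ≤ G t := by
        have h1 := Real.sqrt_le_sqrt hsq
        rwa [Real.sqrt_sq (by positivity), Real.sqrt_sq hGt.le] at h1
      have key : a * (g t ^ θ) * G t ≤ (G t)^2 := by nlinarith
      have hexp : g t ^ (1 - θ - 1) = (g t ^ θ)⁻¹ := by
        rw [show (1 - θ - 1 : ℝ) = -θ by ring, Real.rpow_neg hgt.le]
      rw [hexp]
      have heq : c * ((1 - θ) * (g t ^ θ)⁻¹ * (-(G t)^2)) + G t
          = G t - ((g t ^ θ)⁻¹ * (G t)^2) / a := by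
        rw [hc]; field_simp; ring
      rw [heq, sub_nonpos, le_div_iff₀ ha0]
      have h3 := mul_le_mul_of_nonneg_left key (inv_nonneg.mpr hp.le)
      have h4 : (g t ^ θ)⁻¹ * (g t ^ θ) = 1 := inv_mul_cancel₀ hp.ne'
      nlinarith
  -- conclude
  have hmain : ψ T ≤ ψ 0 := hanti ⟨le_rfl, hT.le⟩ ⟨hT.le, le_rfl⟩ hT.le
  have hF0 : F 0 = 0 := intervalIntegral.integral_same
  have hTnn : 0 ≤ g T ^ (1 - θ) := Real.rpow_nonneg hgT _
  have habs : |f (x 0) - f xb| = g 0 := abs_of_nonneg hg0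
  have hgoal : F T ≤ c * (g 0 ^ (1 - θ)) := by
    have : c * (g T ^ (1 - θ)) + F T ≤ c * (g 0 ^ (1 - θ)) + F 0 := hmain
    rw [hF0] at this
    nlinarith [mul_nonneg hc0.le hTnn]
  calc ∫ t in (0:ℝ)..T, ‖gradient f (x t)‖ = F T := rfl
    _ ≤ c * (g 0 ^ (1 - θ)) := hgoal
    _ = (1 / ((1 - θ) * Real.sqrt (2 * μ))) * |f (x 0) - f xb| ^ (1 - θ) := by
        rw [habs]
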